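/- Under the stated setup, suppose additionally that C^VCG is twice differentiable with (C^VCG)''(I) > 0 on the domain (so that (C^VCG)' is strictly increasing), that C^L is differentiable, and that Q(H(I)/N) > 0 and ∫₀^{Q(H(I)/N)} F(γ) dγ > 0 for all I in the domain. Let η̄ > 0 (the maximum marginal valuation of accuracy in the population) and let S > η̄ (the population sum of marginal valuations). If I^VCG, I^L, I^0 lie in the domain and satisfy (C^VCG)'(I^VCG) = η̄, (C^L)'(I^L) = η̄, and (C^VCG)'(I^0) = S, then I^VCG < I^L and I^VCG < I^0; consequently, since ε is strictly increasing, ε(I^VCG) < ε(I^0) (privacy protection is over-provided under private VCG provision). -/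

import Mathlib

/-- Suboptimality of private provision of population statistics
(Theorem 1 of Abowd–Schmutte–Sexton–Vilhuber): with
`H(I) = N − (1−I)N/k`, `ε(I) = k/((1−I)N)`, VCG cost
`C^VCG(I) = Q(H(I)/N)·H(I)·ε(I)` and Lindahl cost
`C^L(I) = N·(∫₀^{Q(H(I)/N)} γ·f(γ) dγ)·ε(I)` on the domain
`{I ∈ (0,1) : 0 < H(I)/N < 1}`, if `C^VCG` is twice differentiable with strictly
positive second derivative on the domain (so `(C^VCG)′` is strictly increasing),
`C^L` is differentiable on the domain, `Q(H(I)/N) > 0` and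
`∫₀^{Q(H(I)/N)} F(γ) dγ > 0` on the domain, `η̄ > 0` and `S > η̄`, and
`I^VCG, I^L, I^0` lie in the domain with first-order conditions
`(C^VCG)′(I^VCG) = η̄`, `(C^L)′(I^L) = η̄` and `(C^VCG)′(I^0) = S`, then
`I^VCG < I^L` and `I^VCG < I^0`; consequently, since `ε` is strictly increasing,
`ε(I^VCG) < ε(I^0)` (privacy protection is over-provided). -/
theorem stmt_0 (N β k : ℝ) (hN : 0 < N)
    (hβ : 0 < β ∧ β < 1 / (1 + Real.sqrt (Real.exp 1)))
    (hk : k = 1 / 2 + Real.log (1 / β))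
    (H ε : ℝ → ℝ)
    (hH : ∀ I, H I = N - (1 - I) * N / k)
    (hε : ∀ I, ε I = k / ((1 - I) * N))
    (F f Q Q' : ℝ → ℝ)
    (hFmono : StrictMonoOn F (Set.Ici 0))
    (hFderiv : ∀ γ ∈ Set.Ici (0 : ℝ), HasDerivAt F (f γ) γ)
    (hfcont : ContinuousOn f (Set.Ici 0))
    (hF0 : F 0 = 0)
    (hQnonneg : ∀ u ∈ Set.Ioo (0 : ℝ) 1, 0 ≤ Q u)
    (hFQ : ∀ u ∈ Set.Ioo (0 : ℝ) 1, F (Q u) = u)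
    (hQderiv : ∀ u ∈ Set.Ioo (0 : ℝ) 1, HasDerivAt Q (Q' u) u)
    (hQ'pos : ∀ u ∈ Set.Ioo (0 : ℝ) 1, 0 < Q' u)
    (CVCG CL : ℝ → ℝ)
    (hCVCG : ∀ I, CVCG I = Q (H I / N) * H I * ε I)
    (hCL : ∀ I, CL I = N * (∫ γ in (0 : ℝ)..Q (H I / N), γ * f γ) * ε I)
    (Dom : Set ℝ)
    (hDom : Dom = {I | I ∈ Set.Ioo (0 : ℝ) 1 ∧ H I / N ∈ Set.Ioo (0 : ℝ) 1})
    -- C^VCG is twice differentiable with strictly positive second derivative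
    (CV' CV'' : ℝ → ℝ)
    (hCV' : ∀ I ∈ Dom, HasDerivAt CVCG (CV' I) I)
    (hCV'' : ∀ I ∈ Dom, HasDerivAt CV' (CV'' I) I)
    (hconvex : ∀ I ∈ Dom, 0 < CV'' I)
    -- C^L is differentiable
    (CL' : ℝ → ℝ)
    (hCL' : ∀ I ∈ Dom, HasDerivAt CL (CL' I) I)
    -- positivity conditions on the domain
    (hQpos : ∀ I ∈ Dom, 0 < Q (H I / N))
    (hintpos : ∀ I ∈ Dom, 0 < ∫ γ in (0 : ℝ)..Q (H I / N), F γ)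
    -- maximal and total marginal valuations of accuracy
    (etaBar S : ℝ) (hetaBar : 0 < etaBar) (hS : etaBar < S)
    -- equilibrium and optimal accuracy levels and their first-order conditions
    (IVCG IL I0 : ℝ)
    (hIVCG : IVCG ∈ Dom) (hIL : IL ∈ Dom) (hI0 : I0 ∈ Dom)
    (hfocVCG : CV' IVCG = etaBar)
    (hfocL : CL' IL = etaBar)
    (hfoc0 : CV' I0 = S) :
    IVCG < IL ∧ IVCG < I0 ∧ ε IVCG < ε I0 := by
  obtain ⟨hβ0, hβ1⟩ := hβ
  have hβlt1 : β < 1 := lt_trans hβ1 (by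
    rw [div_lt_one (by positivity)]
    linarith [Real.sqrt_pos.mpr (Real.exp_pos 1)])
  have hkpos : 0 < k := by
    rw [hk]
    have := Real.log_pos (one_lt_one_div hβ0 hβlt1)
    linarith
  have hHdiv : ∀ I, H I / N = 1 - (1 - I) / k := fun I => by
    rw [hH]; field_simp
  have hDomEq : Dom = Set.Ioo (max 0 (1 - k)) 1 := by
    rw [hDom]
    ext I
    simp only [Set.mem_setOf_eq, Set.mem_Ioo, max_lt_iff]
    rw [hHdiv I]
    constructor
    · rintro ⟨⟨h1, h2⟩, h3, h4⟩
      refine ⟨⟨h1, ?_⟩, h2⟩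
      have hlt : (1 - I) / k < 1 := by linarith
      have := (div_lt_one hkpos).mp hlt
      linarith
    · rintro ⟨⟨h1, h1'⟩, h2⟩
      refine ⟨⟨h1, h2⟩, ?_, ?_⟩
      · have : (1 - I) / k < 1 := (div_lt_one hkpos).mpr (by linarith)
        linarith
      · have : 0 < (1 - I) / k := div_pos (by linarith) hkpos
        linarith
  have hDomOpen : IsOpen Dom := hDomEq ▸ isOpen_Ioo
  have hDomConv : Convex ℝ Dom := hDomEq ▸ convex_Ioo _ _
  have hDomInt : interior Dom = Dom := by rw [hDomEq, interior_Ioo]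
  -- strict monotonicity of CV'
  have hmono : StrictMonoOn CV' Dom := by
    apply strictMonoOn_of_deriv_pos hDomConv
    · exact fun x hx => ((hCV'' x hx).continuousAt).continuousWithinAt
    · intro x hx
      rw [hDomInt] at hx
      rw [(hCV'' x hx).deriv]
      exact hconvex x hx
  -- IVCG < I0
  have hVCG0 : IVCG < I0 := by
    by_contra hcon
    push_neg at hcon
    rcases eq_or_lt_of_le hcon with hcon | hcon
    · rw [hcon] at hfoc0
      rw [hfocVCG] at hfoc0
      linarith
    · have := hmono hI0 hIVCG hcon
      rw [hfoc0, hfocVCG] at this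
      linarith
  -- key identity: CVCG - CL = N * (∫ F) * ε on Dom
  have key : ∀ I ∈ Dom, CVCG I - CL I
      = N * (∫ γ in (0:ℝ)..Q (H I / N), F γ) * ε I := by
    intro I hI
    have hI' := hI
    rw [hDom] at hI'
    obtain ⟨_, hu⟩ := hI'
    have hq : 0 < Q (H I / N) := hQpos I hI
    have hsub : Set.uIcc (0:ℝ) (Q (H I / N)) ⊆ Set.Ici 0 := by
      rw [Set.uIcc_of_le hq.le]
      exact fun x hx => hx.1
    have hparts : (∫ γ in (0:ℝ)..Q (H I / N), γ * f γ)
        = Q (H I / N) * F (Q (H I / N)) - 0 * F 0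
          - ∫ γ in (0:ℝ)..Q (H I / N), 1 * F γ := by
      exact intervalIntegral.integral_mul_deriv_eq_deriv_mul
        (fun x _ => hasDerivAt_id x) (fun x hx => hFderiv x (hsub hx))
        intervalIntegrable_const
        ((hfcont.mono hsub).intervalIntegrable)
    have hHI : H I = H I / N * N := (div_mul_cancel₀ _ hN.ne').symm
    rw [hCVCG, hCL]
    rw [hparts, hFQ _ hu, hF0]
    simp only [one_mul, mul_zero, sub_zero]
    linear_combination Q (H I / N) * ε I * hHI
  -- setup at IL
  have hIL' := hIL
  rw [hDom] at hIL'
  obtain ⟨hIL1, hILu⟩ := hIL'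
  have hq₀ : 0 < Q (H IL / N) := hQpos IL hIL
  -- derivative of I ↦ H I / N
  have hw : HasDerivAt (fun I => H I / N) (1 / k) IL := by
    have h1 : HasDerivAt (fun I : ℝ => 1 - (1 - I) / k) (1 / k) IL := by
      have h0 := (((hasDerivAt_id IL).const_sub 1).div_const k).const_sub 1
      refine h0.congr_deriv ?_
      simp [neg_div]
    exact h1.congr_of_eventuallyEq (Filter.Eventually.of_forall fun I => hHdiv I)
  have hQw : HasDerivAt (fun I => Q (H I / N)) (Q' (H IL / N) * (1 / k)) IL :=
    (hQderiv _ hILu).comp IL hw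
  -- FTC derivative
  have hFc : ContinuousOn F (Set.Ioi 0) := fun x hx =>
    ((hFderiv x (Set.mem_Ici.mpr (le_of_lt hx))).continuousAt).continuousWithinAt
  have hΦ : HasDerivAt (fun t => ∫ γ in (0:ℝ)..t, F γ) (F (Q (H IL / N))) (Q (H IL / N)) := by
    apply intervalIntegral.integral_hasDerivAt_right
    · apply ContinuousOn.intervalIntegrable
      intro x hx
      have hx0 : (0:ℝ) ≤ x := by
        rw [Set.uIcc_of_le hq₀.le] at hx
        exact hx.1
      exact ((hFderiv x hx0).continuousAt).continuousWithinAt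
    · exact ContinuousOn.stronglyMeasurableAtFilter isOpen_Ioi hFc _ hq₀
    · exact (hFderiv _ hq₀.le).continuousAt
  have hG : HasDerivAt (fun I => ∫ γ in (0:ℝ)..Q (H I / N), F γ)
      (F (Q (H IL / N)) * (Q' (H IL / N) * (1 / k))) IL := by exact hΦ.comp IL hQw
  -- derivative of ε
  have hILlt1 : IL < 1 := hIL1.2
  have hdenne : (1 - IL) * N ≠ 0 :=
    mul_ne_zero (by linarith : (0:ℝ) < 1 - IL).ne' hN.ne'
  have hden : HasDerivAt (fun I : ℝ => (1 - I) * N) (-N) IL := by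
    have h0 := ((hasDerivAt_id IL).const_sub 1).mul_const N
    refine h0.congr_deriv ?_
    simp
  have hεd : HasDerivAt ε (k * N / ((1 - IL) * N) ^ 2) IL := by
    have h2 := (hasDerivAt_const IL k).div hden hdenne
    have h3 : HasDerivAt (fun I => k / ((1 - I) * N)) (k * N / ((1 - IL) * N) ^ 2) IL := by
      refine h2.congr_deriv ?_
      ring
    exact h3.congr_of_eventuallyEq (Filter.Eventually.of_forall fun I => hε I)
  -- product rule
  have hNG : HasDerivAt (fun I => N * ∫ γ in (0:ℝ)..Q (H I / N), F γ)
      (N * (F (Q (H IL / N)) * (Q' (H IL / N) * (1 / k)))) IL := hG.const_mul N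
  have hΨ : HasDerivAt (fun I => N * (∫ γ in (0:ℝ)..Q (H I / N), F γ) * ε I)
      (N * (F (Q (H IL / N)) * (Q' (H IL / N) * (1 / k))) * ε IL
        + N * (∫ γ in (0:ℝ)..Q (H IL / N), F γ) * (k * N / ((1 - IL) * N) ^ 2)) IL :=
    hNG.mul hεd
  -- the derivative value is positive
  have hεILpos : 0 < ε IL := by
    rw [hε IL]
    apply div_pos hkpos
    apply mul_pos (by linarith) hN
  have hdpos : 0 < N * (F (Q (H IL / N)) * (Q' (H IL / N) * (1 / k))) * ε IL
      + N * (∫ γ in (0:ℝ)..Q (H IL / N), F γ) * (k * N / ((1 - IL) * N) ^ 2) := by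
    have h1 : 0 < F (Q (H IL / N)) := by
      rw [hFQ _ hILu]
      exact hILu.1
    have h2 : 0 < Q' (H IL / N) := hQ'pos _ hILu
    have h3 : 0 < (∫ γ in (0:ℝ)..Q (H IL / N), F γ) := hintpos IL hIL
    have h4 : 0 < k * N / ((1 - IL) * N) ^ 2 := by
      apply div_pos (mul_pos hkpos hN)
      have : (0:ℝ) < (1 - IL) * N := mul_pos (by linarith) hN
      positivity
    have h5 : 0 < 1 / k := by positivity
    have := mul_pos (mul_pos hN (mul_pos h1 (mul_pos h2 h5))) hεILpos
    nlinarith [mul_pos (mul_pos hN h3) h4]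
  -- transfer the derivative to CVCG - CL
  have hDeq : (fun I => CVCG I - CL I)
      =ᶠ[nhds IL] (fun I => N * (∫ γ in (0:ℝ)..Q (H I / N), F γ) * ε I) := by
    filter_upwards [hDomOpen.mem_nhds hIL] with I hI
    exact key I hI
  have hD : HasDerivAt (fun I => CVCG I - CL I)
      (N * (F (Q (H IL / N)) * (Q' (H IL / N) * (1 / k))) * ε IL
        + N * (∫ γ in (0:ℝ)..Q (H IL / N), F γ) * (k * N / ((1 - IL) * N) ^ 2)) IL :=
    hΨ.congr_of_eventuallyEq hDeq
  have hD2 : HasDerivAt (fun I => CVCG I - CL I) (CV' IL - CL' IL) IL :=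
    (hCV' IL hIL).sub (hCL' IL hIL)
  have hd_eq := hD2.unique hD
  -- so CV' IL > etaBar
  have hCVIL : etaBar < CV' IL := by
    rw [hfocL] at hd_eq
    linarith
  have hVCGL : IVCG < IL := by
    by_contra hcon
    push_neg at hcon
    rcases eq_or_lt_of_le hcon with hcon | hcon
    · rw [hcon, hfocVCG] at hCVIL
      linarith
    · have := hmono hIL hIVCG hcon
      rw [hfocVCG] at this
      linarith
  refine ⟨hVCGL, hVCG0, ?_⟩
  -- ε IVCG < ε I0
  have hI0' := hI0
  rw [hDom] at hI0'
  have hIV' := hIVCG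
  rw [hDom] at hIV'
  have h10 : 0 < 1 - I0 := by linarith [hI0'.1.2]
  rw [hε IVCG, hε I0]
  apply div_lt_div_of_pos_left hkpos (mul_pos h10 hN)
  exact mul_lt_mul_of_pos_right (by linarith) hN
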